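/- Let M be a symmetric d×d matrix whose entries are real homogeneous polynomials of degree two in x₀, x₁, x₂, such that M(b) is positive semidefinite for all b ∈ ℝ³ and F = det(M) is not identically zero. If 0 ≠ a ∈ ℂ³ is such that the kernel of the complex d×d matrix M(a) has dimension at least two, then F(a) = 0 and all three partial derivatives of F vanish at a (i.e., a is a singular point of the zero set of F). -/

import Mathlib

open MvPolynomial

noncomputable section

open Finset
lemma derivation_prod {R A ι : Type*} [CommRing R] [CommRing A] [Algebra R A]
    [DecidableEq ι] (D : Derivation R A A) (s : Finset ι) (f : ι → A) :
    D (∏ i ∈ s, f i) = ∑ i ∈ s, (∏ j ∈ s.erase i, f j) * D (f i) := by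
  induction s using Finset.induction_on with
  | empty => simp
  | insert b s ha ih =>
    rw [Finset.prod_insert ha, D.leibniz, smul_eq_mul, smul_eq_mul, Finset.sum_insert ha,
      Finset.erase_insert ha, ih, Finset.mul_sum, add_comm]
    congr 1
    refine Finset.sum_congr rfl fun i hi => ?_
    rw [Finset.erase_insert_of_ne (Ne.symm (fun h : i = b => ha (h ▸ hi : b ∈ s))),
      Finset.prod_insert (fun h => ha (Finset.mem_of_mem_erase h))]
    ring

lemma derivation_det {R A n : Type*} [CommRing R] [CommRing A] [Algebra R A]
    [DecidableEq n] [Fintype n] (D : Derivation R A A) (M : Matrix n n A) :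
    D M.det = ∑ k : n, (M.updateCol k fun j => D (M j k)).det := by
  simp_rw [Matrix.det_apply, map_sum, Derivation.map_smul_of_tower,
    derivation_prod D Finset.univ, Finset.smul_sum]
  rw [Finset.sum_comm]
  refine Finset.sum_congr rfl fun k _ => Finset.sum_congr rfl fun σ _ => ?_
  congr 1
  rw [← Finset.prod_erase_mul _ _ (Finset.mem_univ k)]
  congr 1
  · exact Finset.prod_congr rfl fun i hi => by
      rw [Matrix.updateCol_apply, if_neg (Finset.ne_of_mem_erase hi)]
  · rw [Matrix.updateCol_apply, if_pos rfl]

lemma exists_ker_vec {d : ℕ} (A : Matrix (Fin d) (Fin d) ℂ)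
    (h : 2 ≤ Module.finrank ℂ (LinearMap.ker A.mulVecLin)) (k : Fin d) :
    ∃ v : Fin d → ℂ, v ≠ 0 ∧ A.mulVec v = 0 ∧ v k = 0 := by
  set K := LinearMap.ker A.mulVecLin
  set f : K →ₗ[ℂ] ℂ := (LinearMap.proj k) ∘ₗ K.subtype
  have hrk : Module.finrank ℂ (LinearMap.range f) ≤ 1 := by
    simpa using Submodule.finrank_le (LinearMap.range f)
  have := LinearMap.finrank_range_add_finrank_ker f
  have hker1 : 1 ≤ Module.finrank ℂ (LinearMap.ker f) := by omega
  have : Nontrivial (LinearMap.ker f) :=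
    Module.nontrivial_of_finrank_pos (R := ℂ) (by omega)
  obtain ⟨x, hx0⟩ := exists_ne (0 : LinearMap.ker f)
  refine ⟨((x : K) : Fin d → ℂ), ?_, ?_, ?_⟩
  · simp only [ne_eq, Submodule.coe_eq_zero]
    exact fun h => hx0 (Subtype.ext (by simpa using h))
  · rw [← Matrix.mulVecLin_apply]
    exact LinearMap.mem_ker.mp (x : K).2
  · exact LinearMap.mem_ker.mp x.2


/-- If `M` is a symmetric matrix of real homogeneous quadratic forms which is positive
semidefinite at every real point and whose determinant `F` is not identically zero, then any
`0 ≠ a ∈ ℂ³` at which the evaluated matrix `M(a)` has kernel of dimension at least two is a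
singular point of the zero set of `F`. -/
theorem singular_of_kernel_dim_ge_two
    (d : ℕ) (M : Matrix (Fin d) (Fin d) (MvPolynomial (Fin 3) ℝ))
    (hsymm : M.IsSymm)
    (hhom : ∀ i j, (M i j).IsHomogeneous 2)
    (hpsd : ∀ b : Fin 3 → ℝ, (M.map (MvPolynomial.eval b)).PosSemidef)
    (hF : M.det ≠ 0)
    (a : Fin 3 → ℂ) (ha : a ≠ 0)
    (hker : 2 ≤ Module.finrank ℂ
      (LinearMap.ker (Matrix.mulVecLin (M.map (fun p => MvPolynomial.aeval a p))))) :
    MvPolynomial.aeval a M.det = 0 ∧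
      ∀ i : Fin 3, MvPolynomial.aeval a (MvPolynomial.pderiv i M.det) = 0 := by
  set A : Matrix (Fin d) (Fin d) ℂ := M.map (fun p => MvPolynomial.aeval a p) with hA
  have hmapdet : ∀ N : Matrix (Fin d) (Fin d) (MvPolynomial (Fin 3) ℝ),
      MvPolynomial.aeval a N.det = (N.map (fun p => MvPolynomial.aeval a p)).det := by
    intro N
    exact RingHom.map_det (MvPolynomial.aeval a).toRingHom N
  have hfr : 0 < Module.finrank ℂ (LinearMap.ker A.mulVecLin) := by omega
  constructor
  · rw [hmapdet M]
    rw [← Matrix.exists_mulVec_eq_zero_iff]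
    have : Nontrivial (LinearMap.ker A.mulVecLin) :=
      Module.nontrivial_of_finrank_pos (R := ℂ) hfr
    obtain ⟨x, hx0⟩ := exists_ne (0 : LinearMap.ker A.mulVecLin)
    refine ⟨x, fun h => hx0 (Subtype.ext (by simp [h])), ?_⟩
    rw [← Matrix.mulVecLin_apply]
    exact LinearMap.mem_ker.mp x.2
  · intro i
    rw [derivation_det (MvPolynomial.pderiv i) M, map_sum]
    refine Finset.sum_eq_zero fun k _ => ?_
    rw [hmapdet]
    obtain ⟨v, hv0, hAv, hvk⟩ := exists_ker_vec A hker k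
    rw [← Matrix.exists_mulVec_eq_zero_iff]
    refine ⟨v, hv0, ?_⟩
    funext i'
    have : ((M.updateCol k fun j => (MvPolynomial.pderiv i) (M j k)).map
        (fun p => MvPolynomial.aeval a p)).mulVec v i' = A.mulVec v i' := by
      simp only [Matrix.mulVec, dotProduct, Matrix.map_apply]
      refine Finset.sum_congr rfl fun j _ => ?_
      by_cases hj : j = k
      · subst hj; simp [hvk]
      · rw [Matrix.updateCol_ne hj]; rfl
    rw [this, hAv]
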